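/- Let α ∈ (0,1), A, B, D > 0, C > D, M ≥ 0, and let F : [1,∞) → [0,∞) be a differentiable nondecreasing function with |F'(x)| ≤ M for all x > 1. For n ∈ ℕ define w_n = Σ_{k≥n} e^{-k + A(k+B)^{1-α}} F((k+C)/D). If A(1-α)/(n+B)^α ≤ 1/4, then w_n ≤ 4 e^{-n + A(n+B)^{1-α}} F((n+C)/D) + (16M/D) e^{-n + A(n+B)^{1-α}}. -/

import Mathlib

open Real Set

/-- Concavity estimate for rpow: `(y+t)^p ≤ y^p + p y^(p-1) t` for `0 < p < 1`. -/
lemma rpow_add_le_concave (p y t : ℝ) (hp0 : 0 < p) (hp1 : p < 1) (hy : 0 < y) (ht : 0 ≤ t) :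
    (y + t) ^ p ≤ y ^ p + p * y ^ (p - 1) * t := by
  rcases eq_or_lt_of_le ht with h | h
  · simp [← h]
  · have hcont : ContinuousOn (fun x : ℝ => x ^ p) (Set.Icc y (y + t)) := fun x _ =>
      (Real.continuousAt_rpow_const x p (Or.inr hp0.le)).continuousWithinAt
    have hd : ∀ x ∈ Set.Ioo y (y + t),
        HasDerivAt (fun x : ℝ => x ^ p) (p * x ^ (p - 1)) x := by
      intro x hx
      exact Real.hasDerivAt_rpow_const (x := x) (p := p)
        (Or.inl (by intro h0; rw [h0] at hx; linarith [hx.1]))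
    obtain ⟨c, hc, hslope⟩ := exists_hasDerivAt_eq_slope (fun x : ℝ => x ^ p)
      (fun x => p * x ^ (p - 1)) (by linarith) hcont hd
    have hcpos : 0 < c := lt_trans hy hc.1
    have hle : c ^ (p - 1) ≤ y ^ (p - 1) :=
      Real.rpow_le_rpow_of_nonpos hy hc.1.le (by linarith)
    have hbt : y + t - y = t := by ring
    rw [hbt] at hslope
    have heq : (y + t) ^ p - y ^ p = p * c ^ (p - 1) * t := by
      field_simp at hslope
      linarith [hslope]
    nlinarith [heq, mul_le_mul_of_nonneg_left hle hp0.le]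

theorem tail_sum_estimate
    (α A B C D M : ℝ) (hα : α ∈ Set.Ioo (0:ℝ) 1)
    (hA : 0 < A) (hB : 0 < B) (hD : 0 < D) (hCD : D < C) (hM : 0 ≤ M)
    (F F' : ℝ → ℝ)
    (hF0 : ∀ x ≥ (1:ℝ), 0 ≤ F x)
    (hmono : MonotoneOn F (Set.Ici (1:ℝ)))
    (hderiv : ∀ x > (1:ℝ), HasDerivAt F (F' x) x)
    (hF'bdd : ∀ x > (1:ℝ), |F' x| ≤ M)
    (n : ℕ) (hn : A * (1 - α) / (((n:ℝ) + B) ^ α) ≤ 1/4) :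
    (∑' k : ℕ, Real.exp (-((n:ℝ) + k) + A * (((n:ℝ) + k + B) ^ (1 - α)))
        * F (((n:ℝ) + k + C) / D))
      ≤ 4 * Real.exp (-(n:ℝ) + A * (((n:ℝ) + B) ^ (1 - α))) * F (((n:ℝ) + C) / D)
        + (16 * M / D) * Real.exp (-(n:ℝ) + A * (((n:ℝ) + B) ^ (1 - α))) := by
  obtain ⟨hα0, hα1⟩ := hα
  set base : ℝ := -(n:ℝ) + A * (((n:ℝ) + B) ^ (1 - α)) with hbase
  set r : ℝ := Real.exp (-(3/4)) with hr
  have hr0 : 0 < r := Real.exp_pos _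
  have hr34 : r ≤ 3/4 := by
    rw [hr, Real.exp_neg, inv_le_comm₀ (Real.exp_pos _) (by norm_num)]
    have := Real.add_one_le_exp (3/4 : ℝ)
    linarith
  have hr1 : r < 1 := lt_of_le_of_lt hr34 (by norm_num)
  have hnB : 0 < (n:ℝ) + B := by positivity
  have hn0 : (0:ℝ) ≤ n := Nat.cast_nonneg n
  have ha1 : 1 < ((n:ℝ) + C) / D := by
    rw [lt_div_iff₀ hD]; linarith
  set F₀ : ℝ := F (((n:ℝ) + C) / D) with hF₀
  have hF₀0 : 0 ≤ F₀ := hF0 _ ha1.le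
  -- exponent bound
  have hexp : ∀ k : ℕ, -((n:ℝ) + k) + A * (((n:ℝ) + k + B) ^ (1 - α))
      ≤ base - (3/4) * k := by
    intro k
    have hcon := rpow_add_le_concave (1 - α) ((n:ℝ) + B) k (by linarith) (by linarith)
      hnB (Nat.cast_nonneg k)
    have hexpo : (1 - α) - 1 = -α := by ring
    rw [hexpo] at hcon
    have hslope : A * ((1 - α) * ((n:ℝ) + B) ^ (-α)) ≤ 1/4 := by
      rw [Real.rpow_neg hnB.le]
      have heq2 : A * ((1 - α) * (((n:ℝ) + B) ^ α)⁻¹) = A * (1 - α) / (((n:ℝ) + B) ^ α) := by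
        ring
      rw [heq2]
      exact hn
    have h1 : A * (((n:ℝ) + k + B) ^ (1 - α))
        ≤ A * (((n:ℝ) + B) ^ (1 - α)) + (A * ((1 - α) * ((n:ℝ) + B) ^ (-α))) * k := by
      have hrw : (n:ℝ) + k + B = ((n:ℝ) + B) + k := by ring
      rw [hrw]
      nlinarith [hcon]
    have h2 : (A * ((1 - α) * ((n:ℝ) + B) ^ (-α))) * k ≤ (1/4) * k :=
      mul_le_mul_of_nonneg_right hslope (Nat.cast_nonneg k)
    rw [hbase]
    linarith
  -- F bound
  have hFb : ∀ k : ℕ, F (((n:ℝ) + k + C) / D) ≤ F₀ + (M / D) * k := by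
    intro k
    rcases Nat.eq_zero_or_pos k with hk | hk
    · subst hk; simp [hF₀]
    · have hkpos : (0:ℝ) < k := by exact_mod_cast hk
      set a : ℝ := ((n:ℝ) + C) / D with ha
      set b : ℝ := ((n:ℝ) + k + C) / D with hb
      have hba : b - a = k / D := by rw [ha, hb]; field_simp; ring
      have hab : a < b := by
        have : (0:ℝ) < k / D := by positivity
        linarith
      have hcont : ContinuousOn F (Set.Icc a b) := fun x hx =>
        ((hderiv x (lt_of_lt_of_le ha1 hx.1)).continuousAt).continuousWithinAt
      obtain ⟨c, hc, hslope⟩ := exists_hasDerivAt_eq_slope F F' hab hcont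
        (fun x hx => hderiv x (lt_trans ha1 hx.1))
      have hc1 : 1 < c := lt_trans ha1 hc.1
      have hFc : F' c ≤ M := (abs_le.mp (hF'bdd c hc1)).2
      have : F b - F a = F' c * (k / D) := by
        rw [hslope, hba]
        have hkD : (k:ℝ) / D ≠ 0 := by positivity
        field_simp
      have hMk : F' c * (k / D) ≤ M * (k / D) :=
        mul_le_mul_of_nonneg_right hFc (by positivity)
      have : F b ≤ F a + M * (k / D) := by linarith
      calc F b ≤ F a + M * (k / D) := this
        _ = F₀ + (M / D) * k := by rw [ha, hF₀]; ring
  -- termwise bound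
  have hterm : ∀ k : ℕ,
      Real.exp (-((n:ℝ) + k) + A * (((n:ℝ) + k + B) ^ (1 - α))) * F (((n:ℝ) + k + C) / D)
      ≤ Real.exp base * (r ^ k * (F₀ + (M / D) * k)) := by
    intro k
    have hFnn : 0 ≤ F (((n:ℝ) + k + C) / D) := by
      apply hF0
      rw [ge_iff_le, le_div_iff₀ hD]
      linarith [Nat.cast_nonneg (α := ℝ) k]
    have he : Real.exp (-((n:ℝ) + k) + A * (((n:ℝ) + k + B) ^ (1 - α)))
        ≤ Real.exp base * r ^ k := by
      have : Real.exp base * r ^ k = Real.exp (base - (3/4) * k) := by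
        rw [hr, ← Real.exp_nat_mul, ← Real.exp_add]
        ring_nf
      rw [this]
      exact Real.exp_le_exp.mpr (hexp k)
    calc Real.exp (-((n:ℝ) + k) + A * (((n:ℝ) + k + B) ^ (1 - α))) * F (((n:ℝ) + k + C) / D)
        ≤ (Real.exp base * r ^ k) * (F₀ + (M / D) * k) :=
          mul_le_mul he (hFb k) hFnn (by positivity)
      _ = Real.exp base * (r ^ k * (F₀ + (M / D) * k)) := by ring
  -- summability of the dominating series
  have hsum1 : Summable (fun k : ℕ => r ^ k) := summable_geometric_of_lt_one hr0.le hr1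
  have hsum2 : Summable (fun k : ℕ => (k : ℝ) * r ^ k) := by
    have := summable_pow_mul_geometric_of_norm_lt_one (R := ℝ) 1 (by
      rw [Real.norm_eq_abs, abs_of_pos hr0]; exact hr1)
    simpa using this
  have hsumbound : Summable (fun k : ℕ => Real.exp base * (r ^ k * (F₀ + (M / D) * k))) := by
    have : (fun k : ℕ => Real.exp base * (r ^ k * (F₀ + (M / D) * k)))
        = fun k : ℕ => (Real.exp base * F₀) * r ^ k
          + (Real.exp base * (M / D)) * ((k : ℝ) * r ^ k) := by
      funext k; ring
    rw [this]
    exact ((hsum1.mul_left _).add (hsum2.mul_left _))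
  have hsumorig : Summable (fun k : ℕ =>
      Real.exp (-((n:ℝ) + k) + A * (((n:ℝ) + k + B) ^ (1 - α))) * F (((n:ℝ) + k + C) / D)) := by
    apply Summable.of_nonneg_of_le ?_ hterm hsumbound
    intro k
    apply mul_nonneg (Real.exp_pos _).le
    apply hF0
    rw [ge_iff_le, le_div_iff₀ hD]
    linarith [Nat.cast_nonneg (α := ℝ) k]
  -- compute tsum of bound
  have htsum : (∑' k : ℕ, Real.exp base * (r ^ k * (F₀ + (M / D) * k)))
      = (Real.exp base * F₀) * (1 - r)⁻¹
        + (Real.exp base * (M / D)) * (r / (1 - r) ^ 2) := by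
    have hrewrite : (fun k : ℕ => Real.exp base * (r ^ k * (F₀ + (M / D) * k)))
        = fun k : ℕ => (Real.exp base * F₀) * r ^ k
          + (Real.exp base * (M / D)) * ((k : ℝ) * r ^ k) := by
      funext k; ring
    rw [hrewrite, Summable.tsum_add (hsum1.mul_left _) (hsum2.mul_left _),
      tsum_mul_left, tsum_mul_left, tsum_geometric_of_lt_one hr0.le hr1,
      tsum_coe_mul_geometric_of_norm_lt_one (by
        rw [Real.norm_eq_abs, abs_of_pos hr0]; exact hr1)]
  -- combine
  have step := Summable.tsum_le_tsum hterm hsumorig hsumbound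
  rw [htsum] at step
  have h1r : (1:ℝ)/4 ≤ 1 - r := by linarith
  have hinv : (1 - r)⁻¹ ≤ 4 := by
    rw [inv_le_comm₀ (by linarith) (by norm_num)]
    linarith
  have hfrac : r / (1 - r) ^ 2 ≤ 16 := by
    rw [div_le_iff₀ (by nlinarith)]
    nlinarith
  have hexpb : 0 < Real.exp base := Real.exp_pos _
  have hMD : 0 ≤ M / D := by positivity
  have final : (Real.exp base * F₀) * (1 - r)⁻¹
      + (Real.exp base * (M / D)) * (r / (1 - r) ^ 2)
      ≤ 4 * Real.exp base * F₀ + (16 * M / D) * Real.exp base := by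
    have t1 : (Real.exp base * F₀) * (1 - r)⁻¹ ≤ 4 * Real.exp base * F₀ := by
      have := mul_le_mul_of_nonneg_left hinv (by positivity : 0 ≤ Real.exp base * F₀)
      linarith [this]
    have t2 : (Real.exp base * (M / D)) * (r / (1 - r) ^ 2)
        ≤ (16 * M / D) * Real.exp base := by
      have := mul_le_mul_of_nonneg_left hfrac (by positivity : 0 ≤ Real.exp base * (M / D))
      calc (Real.exp base * (M / D)) * (r / (1 - r) ^ 2)
          ≤ Real.exp base * (M / D) * 16 := this
        _ = (16 * M / D) * Real.exp base := by ring
    linarith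
  exact le_trans step final
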